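/- Let u : ℝ × ℝ → ℝ be sufficiently smooth, positive, and satisfy u_t = ∂x(u^{−4/3} u_x) at every point. Then for every real ε, the function v(t,x) := (1+εx)^{−3} · u(t, x/(1+εx)), defined on the set {(t,x) : 1+εx > 0}, is positive and satisfies v_t = ∂x(v^{−4/3} v_x) at every point of that set. (This is the finite transformation generated by the projective symmetry X₅ = x² ∂x − 3xu ∂u admitted in the special case K = u^{−4/3}.) -/

import Mathlib

noncomputable section

/-- Partial derivative with respect to the first variable (time). -/
def pdT (f : ℝ × ℝ → ℝ) (t x : ℝ) : ℝ := deriv (fun s => f (s, x)) t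

/-- Partial derivative with respect to the second variable (space). -/
def pdX (f : ℝ × ℝ → ℝ) (t x : ℝ) : ℝ := deriv (fun y => f (t, y)) x

/-- the finite projective transformation generated by
`X₅ = x² ∂x − 3xu ∂u` maps positive solutions of `u_t = ∂x(u^{−4/3} u_x)`
to positive solutions, on the set where `1 + εx > 0`. -/
theorem projective_symmetry_special_power
    (u : ℝ × ℝ → ℝ) (hupos : ∀ p, 0 < u p) (hu : ContDiff ℝ 2 u)
    (heq : ∀ t x : ℝ,
      pdT u t x = deriv (fun y => u (t, y) ^ (-(4 / 3) : ℝ) * pdX u t y) x) :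
    ∀ ε : ℝ, ∀ t x : ℝ, 1 + ε * x > 0 →
      0 < (fun p : ℝ × ℝ => ((1 + ε * p.2) ^ 3)⁻¹ * u (p.1, p.2 / (1 + ε * p.2))) (t, x) ∧
      pdT (fun p => ((1 + ε * p.2) ^ 3)⁻¹ * u (p.1, p.2 / (1 + ε * p.2))) t x =
        deriv (fun y =>
          ((fun p : ℝ × ℝ => ((1 + ε * p.2) ^ 3)⁻¹ *
              u (p.1, p.2 / (1 + ε * p.2))) (t, y)) ^ (-(4 / 3) : ℝ) *
            pdX (fun p => ((1 + ε * p.2) ^ 3)⁻¹ *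
              u (p.1, p.2 / (1 + ε * p.2))) t y) x := by
  intro ε t x hc
  set v : ℝ × ℝ → ℝ := fun p => ((1 + ε * p.2) ^ 3)⁻¹ * u (p.1, p.2 / (1 + ε * p.2)) with hvdef
  -- positivity part
  have hvpos : ∀ p : ℝ × ℝ, 0 < 1 + ε * p.2 → 0 < v p := by
    intro p hp
    exact mul_pos (inv_pos.mpr (pow_pos hp 3)) (hupos _)
  refine ⟨hvpos (t, x) hc, ?_⟩
  -- basic smoothness facts for w := u(t, ·)
  set w : ℝ → ℝ := fun y => u (t, y) with hwdef
  have hw2 : ContDiff ℝ 2 w := hu.comp (contDiff_const.prodMk contDiff_id)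
  have hwd : Differentiable ℝ w := hw2.differentiable (by norm_num)
  have hwd' : Differentiable ℝ (deriv w) := by
    have h21 : (2 : WithTop ℕ∞) = 1 + 1 := by norm_num
    rw [h21] at hw2
    exact ((contDiff_succ_iff_deriv.mp hw2).2.2).differentiable (by norm_num)
  have hWpos : ∀ y, 0 < w y := fun y => hupos (t, y)
  -- z and its derivative
  set z : ℝ → ℝ := fun y => y / (1 + ε * y) with hzdef
  have hden : ∀ x' : ℝ, HasDerivAt (fun y => 1 + ε * y) ε x' := by
    intro x'
    simpa using ((hasDerivAt_id x').const_mul ε).const_add 1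
  have hz' : ∀ x' : ℝ, 0 < 1 + ε * x' →
      HasDerivAt z (((1 + ε * x') ^ 2)⁻¹) x' := by
    intro x' hc'
    have h := (hasDerivAt_id x').div (hden x') hc'.ne'
    have e : ((1 + ε * x') ^ 2)⁻¹ = (1 * (1 + ε * x') - id x' * ε) / (1 + ε * x') ^ 2 := by
      show ((1 + ε * x') ^ 2)⁻¹ = (1 * (1 + ε * x') - x' * ε) / (1 + ε * x') ^ 2
      ring
    rw [e]
    exact h
  -- derivative of y ↦ v (t, y)
  have hvx : ∀ x' : ℝ, 0 < 1 + ε * x' →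
      HasDerivAt (fun y => v (t, y))
        ((-(↑3 * (1 + ε * x') ^ 2 * ε) / ((1 + ε * x') ^ 3) ^ 2) * w (z x')
          + ((1 + ε * x') ^ 3)⁻¹ * (deriv w (z x') * ((1 + ε * x') ^ 2)⁻¹)) x' := by
    intro x' hc'
    have hA : HasDerivAt (fun y => ((1 + ε * y) ^ 3)⁻¹)
        (-(↑3 * (1 + ε * x') ^ 2 * ε) / ((1 + ε * x') ^ 3) ^ 2) x' :=
      ((hden x').pow 3).inv (pow_pos hc' 3).ne'
    have hcomp : HasDerivAt (fun y => w (z y))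
        (deriv w (z x') * ((1 + ε * x') ^ 2)⁻¹) x' :=
      ((hwd (z x')).hasDerivAt).comp x' (hz' x' hc')
    exact hA.mul hcomp
  -- the reduced form g
  set g : ℝ → ℝ := fun y => u (t, y) ^ (-(4 / 3) : ℝ) * pdX u t y with hgdef
  have hg_eq : ∀ y, g y = w y ^ (-(4 / 3) : ℝ) * deriv w y := fun y => rfl
  have hgd : ∀ y, DifferentiableAt ℝ g y := by
    intro y
    exact ((hwd y).rpow_const (Or.inl (hWpos y).ne')).mul (hwd' y)
  have hgderiv : ∀ y, deriv g y = pdT u t y := fun y => (heq t y).symm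
  -- pointwise identity for the flux
  have hflux : ∀ x' : ℝ, 0 < 1 + ε * x' →
      (v (t, x')) ^ (-(4 / 3) : ℝ) * pdX v t x'
        = -3 * ε * (w (z x')) ^ (-(1 / 3) : ℝ) + (1 + ε * x')⁻¹ * g (z x') := by
    intro x' hc'
    have hpd : pdX v t x'
        = (-(↑3 * (1 + ε * x') ^ 2 * ε) / ((1 + ε * x') ^ 3) ^ 2) * w (z x')
          + ((1 + ε * x') ^ 3)⁻¹ * (deriv w (z x') * ((1 + ε * x') ^ 2)⁻¹) :=
      (hvx x' hc').deriv
    have hvval : v (t, x') = ((1 + ε * x') ^ 3)⁻¹ * w (z x') := rfl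
    rw [hpd, hvval, hg_eq]
    set c := 1 + ε * x' with hcdef
    set U := w (z x') with hUdef
    set W := deriv w (z x') with hWdef
    have hU : 0 < U := hWpos _
    have hA4 : ((c ^ 3)⁻¹ : ℝ) ^ (-(4 / 3) : ℝ) = c ^ 4 := by
      rw [← Real.rpow_natCast c 3, ← Real.rpow_neg_one (c ^ ((3:ℕ):ℝ)),
        ← Real.rpow_mul hc'.le, ← Real.rpow_mul hc'.le, ← Real.rpow_natCast c 4]
      norm_num
    have hmul : (((c ^ 3)⁻¹ : ℝ) * U) ^ (-(4 / 3) : ℝ)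
        = c ^ 4 * U ^ (-(4 / 3) : ℝ) := by
      rw [Real.mul_rpow (by positivity) hU.le, hA4]
    rw [hmul]
    have hU13 : U ^ (-(1 / 3) : ℝ) = U ^ (-(4 / 3) : ℝ) * U := by
      have h := Real.rpow_add hU (-(4 / 3)) 1
      rw [Real.rpow_one] at h
      rw [← h]
      norm_num
    rw [hU13]
    field_simp
  -- rewrite the outer deriv using eventual equality
  have hopen : IsOpen {x' : ℝ | 0 < 1 + ε * x'} :=
    isOpen_lt continuous_const (by continuity)
  have hev : (fun y => (v (t, y)) ^ (-(4 / 3) : ℝ) * pdX v t y)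
      =ᶠ[nhds x] (fun x' => -3 * ε * (w (z x')) ^ (-(1 / 3) : ℝ) + (1 + ε * x')⁻¹ * g (z x')) := by
    filter_upwards [hopen.mem_nhds hc] with x' hc'
    exact hflux x' hc'
  have hrhs : deriv (fun y => (v (t, y)) ^ (-(4 / 3) : ℝ) * pdX v t y) x
      = deriv (fun x' => -3 * ε * (w (z x')) ^ (-(1 / 3) : ℝ) + (1 + ε * x')⁻¹ * g (z x')) x :=
    hev.deriv_eq
  -- derivative of the reduced flux
  have hzx : HasDerivAt z (((1 + ε * x) ^ 2)⁻¹) x := hz' x hc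
  have hwz : HasDerivAt (fun x' => w (z x'))
      (deriv w (z x) * ((1 + ε * x) ^ 2)⁻¹) x :=
    ((hwd (z x)).hasDerivAt).comp x hzx
  have hG1 : HasDerivAt (fun x' => -3 * ε * (w (z x')) ^ (-(1 / 3) : ℝ))
      (-3 * ε * ((deriv w (z x) * ((1 + ε * x) ^ 2)⁻¹) * (-(1 / 3)) *
        (w (z x)) ^ ((-(1 / 3) : ℝ) - 1))) x :=
    (hwz.rpow_const (Or.inl (hWpos (z x)).ne')).const_mul (-3 * ε)
  have hG2 : HasDerivAt (fun x' => (1 + ε * x')⁻¹) (-ε / (1 + ε * x) ^ 2) x :=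
    (hden x).inv hc.ne'
  have hG3 : HasDerivAt (fun x' => g (z x'))
      (deriv g (z x) * ((1 + ε * x) ^ 2)⁻¹) x :=
    ((hgd (z x)).hasDerivAt).comp x hzx
  have hG : HasDerivAt
      (fun x' => -3 * ε * (w (z x')) ^ (-(1 / 3) : ℝ) + (1 + ε * x')⁻¹ * g (z x'))
      (-3 * ε * ((deriv w (z x) * ((1 + ε * x) ^ 2)⁻¹) * (-(1 / 3)) *
        (w (z x)) ^ ((-(1 / 3) : ℝ) - 1))
       + ((-ε / (1 + ε * x) ^ 2) * g (z x)
          + (1 + ε * x)⁻¹ * (deriv g (z x) * ((1 + ε * x) ^ 2)⁻¹))) x :=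
    hG1.add (hG2.mul hG3)
  -- time derivative of v
  have hT : HasDerivAt (fun s => u (s, z x)) (pdT u t (z x)) t := by
    have hd : Differentiable ℝ (fun s : ℝ => u (s, z x)) :=
      (hu.differentiable (by norm_num)).comp (differentiable_id.prodMk (differentiable_const _))
    exact (hd t).hasDerivAt
  have hTv : pdT v t x = ((1 + ε * x) ^ 3)⁻¹ * pdT u t (z x) := by
    have h := hT.const_mul (((1 + ε * x) ^ 3)⁻¹)
    exact (h : HasDerivAt (fun s => v (s, x)) _ t).deriv
  -- assemble
  rw [hrhs, hG.deriv, hTv, hgderiv, hg_eq]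
  have hexp : ((-(1 / 3) : ℝ) - 1) = (-(4 / 3) : ℝ) := by norm_num
  rw [hexp]
  set c := 1 + ε * x
  set U := w (z x)
  set W := deriv w (z x)
  set T := pdT u t (z x)
  field_simp
  ring
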